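/- Let G and H be graphs each with at least two vertices, with G connected. If the lexicographic product G[H] is well-dominated, then H is well-dominated. -/

import Mathlib

open SimpleGraph Finset

/-- Open neighborhood of a set: vertices having a neighbor in `S`. -/
def nbhd {V : Type*} (G : SimpleGraph V) (S : Set V) : Set V := {v | ∃ u ∈ S, G.Adj u v}

/-- Closed neighborhood of a vertex. -/
def closedNbhd {V : Type*} (G : SimpleGraph V) (v : V) : Set V := insert v (G.neighborSet v)

/-- `S` dominates vertex `v`. -/
def Dominates {V : Type*} (G : SimpleGraph V) (S : Set V) (v : V) : Prop :=
  v ∈ S ∨ ∃ u ∈ S, G.Adj u v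

/-- `D` is a dominating set of `G`. -/
def IsDomSet {V : Type*} (G : SimpleGraph V) (D : Set V) : Prop := ∀ v, Dominates G D v

/-- `D` is a minimal dominating set of `G`. -/
def IsMinDomSet {V : Type*} (G : SimpleGraph V) (D : Set V) : Prop :=
  IsDomSet G D ∧ ∀ D' ⊂ D, ¬ IsDomSet G D'

/-- `D` is an irreducible dominating set of `G`. -/
def IsIrredDomSet {V : Type*} (G : SimpleGraph V) (D : Set V) : Prop :=
  IsDomSet G D ∧ ¬ ∃ u ∈ D, IsDomSet G (D \ {u}) ∧ nbhd G D = nbhd G (D \ {u})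

/-- Lexicographic product of two simple graphs. -/
def lexProd {V W : Type*} (G : SimpleGraph V) (H : SimpleGraph W) : SimpleGraph (V × W) where
  Adj p q := G.Adj p.1 q.1 ∨ (p.1 = q.1 ∧ H.Adj p.2 q.2)
  symm := by
    constructor
    rintro p q (h | ⟨e, h⟩)
    · exact Or.inl h.symm
    · exact Or.inr ⟨e.symm, h.symm⟩
  loopless := by
    constructor
    rintro p (h | ⟨_, h⟩)
    · exact G.loopless.irrefl _ h
    · exact H.loopless.irrefl _ h

/-- Projection of `D ⊆ V(G) × V(H)` to `G`. -/
def projG {V W : Type*} (D : Set (V × W)) : Set V := {x | ∃ y, (x, y) ∈ D}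

/-- Fiber of `D ⊆ V(G) × V(H)` over `x ∈ V(G)`. -/
def projH {V W : Type*} (D : Set (V × W)) (x : V) : Set W := {y | (x, y) ∈ D}

/-- A graph is well-dominated if all its minimal dominating sets have the same size. -/
def WellDominated (V : Type*) [Fintype V] (G : SimpleGraph V) : Prop :=
  ∀ D₁ D₂ : Finset V, IsMinDomSet G ↑D₁ → IsMinDomSet G ↑D₂ → D₁.card = D₂.card


lemma domMono {V : Type*} (G : SimpleGraph V) {S T : Set V} (h : S ⊆ T)
    (hS : IsDomSet G S) : IsDomSet G T := by
  intro v
  rcases hS v with hv | ⟨u, hu, huv⟩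
  · exact Or.inl (h hv)
  · exact Or.inr ⟨u, h hu, huv⟩

lemma ssubset_step {α : Type*} {D' : Set α} {D : Finset α} (h : D' ⊂ ↑D) :
    ∃ u ∈ D, D' ⊆ (↑D : Set α) \ {u} := by
  obtain ⟨u, huD, huD'⟩ := Set.exists_of_ssubset h
  exact ⟨u, huD, fun v hv => ⟨h.subset hv, fun hvu => huD' (by rwa [← hvu])⟩⟩

lemma exists_minimal_subset {α : Type*} (P : Finset α → Prop) :
    ∀ (s : Finset α), P s → ∃ t, t ⊆ s ∧ P t ∧ ∀ u ⊂ t, ¬ P u := by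
  intro s
  induction s using Finset.strongInductionOn with
  | _ s ih =>
    intro hs
    by_cases hc : ∃ u, u ⊂ s ∧ P u
    · obtain ⟨u, hus, hu⟩ := hc
      obtain ⟨t, hts, ht, hmin⟩ := ih u hus hu
      exact ⟨t, hts.trans hus.subset, ht, hmin⟩
    · push_neg at hc
      exact ⟨s, subset_rfl, hs, hc⟩

lemma key {V W : Type*} [Fintype V] [Fintype W] (G : SimpleGraph V) (H : SimpleGraph W)
    [DecidableEq V] [DecidableEq W]
    (hW : Nonempty W) (x₀ : V) (F : Finset (V × W))
    (hFA : ∀ p ∈ F, p.1 ≠ x₀ ∧ ¬ G.Adj x₀ p.1)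
    (hFdom : ∀ a : V, a ≠ x₀ → ¬ G.Adj x₀ a → ∀ y : W,
      (a, y) ∈ F ∨ ∃ q ∈ F, (lexProd G H).Adj q (a, y))
    (hFmin : ∀ f ∈ F, ∃ a y, a ≠ x₀ ∧ ¬ G.Adj x₀ a ∧ (a, y) ∉ F.erase f ∧
      ∀ q ∈ F.erase f, ¬ (lexProd G H).Adj q (a, y))
    (D : Finset W) (hD : IsMinDomSet H ↑D) :
    IsMinDomSet (lexProd G H) ↑((({x₀} : Finset V) ×ˢ D) ∪ F) := by
  have hDne : D.Nonempty := by
    obtain ⟨w⟩ := hW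
    rcases hD.1 w with hw | ⟨u, hu, _⟩
    · exact ⟨w, hw⟩
    · exact ⟨u, hu⟩
  constructor
  · rintro ⟨x, y⟩
    by_cases hx : x = x₀
    · rcases hD.1 y with hy | ⟨d, hdD, hdy⟩
      · left
        exact Finset.mem_coe.mpr (Finset.mem_union_left _ (Finset.mem_product.mpr
          ⟨Finset.mem_singleton.mpr hx, Finset.mem_coe.mp hy⟩))
      · right
        exact ⟨(x₀, d), by simp [Finset.mem_coe.mp hdD], Or.inr ⟨hx.symm, hdy⟩⟩
    · by_cases hadj : G.Adj x₀ x
      · obtain ⟨d, hd⟩ := hDne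
        right; exact ⟨(x₀, d), by simp [hd], Or.inl hadj⟩
      · rcases hFdom x hx hadj y with h | ⟨q, hq, hqa⟩
        · left; simp [h]
        · right; exact ⟨q, by simp [hq], hqa⟩
  · intro S' hS' hS'dom
    obtain ⟨s, hsS, hsub⟩ := ssubset_step hS'
    have hdom' : IsDomSet (lexProd G H) ((↑((({x₀} : Finset V) ×ˢ D) ∪ F) : Set (V × W)) \ {s}) :=
      domMono _ hsub hS'dom
    rcases Finset.mem_union.mp hsS with hs1 | hs2
    · -- s = (x₀, d), d ∈ D
      obtain ⟨hsx, hsd⟩ := Finset.mem_product.mp hs1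
      have hsx : s.1 = x₀ := Finset.mem_singleton.mp hsx
      -- D minus d not dominating
      have hss : (↑D : Set W) \ {s.2} ⊂ ↑D := by
        apply Set.ssubset_iff_of_subset Set.diff_subset |>.mpr
        exact ⟨s.2, hsd, fun h => h.2 rfl⟩
      have hnd := hD.2 _ hss
      rw [IsDomSet] at hnd
      push_neg at hnd
      obtain ⟨y, hy⟩ := hnd
      rw [Dominates] at hy
      push_neg at hy
      obtain ⟨hy1, hy2⟩ := hy
      rcases hdom' (x₀, y) with ⟨hmem, hne⟩ | ⟨q, ⟨hqmem, hqne⟩, hqadj⟩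
      · rcases Finset.mem_union.mp (Finset.mem_coe.mp hmem) with h | h
        · obtain ⟨h1, h2⟩ := Finset.mem_product.mp h
          apply hy1
          refine ⟨Finset.mem_coe.mpr h2, fun hyd => ?_⟩
          apply hne
          have hs : s = (x₀, y) := Prod.ext hsx (Set.mem_singleton_iff.mp hyd).symm
          simp [hs]
        · exact (hFA _ h).1 rfl
      · rcases Finset.mem_union.mp (Finset.mem_coe.mp hqmem) with h | h
        · obtain ⟨h1, h2⟩ := Finset.mem_product.mp h
          have hq1 : q.1 = x₀ := Finset.mem_singleton.mp h1
          rcases hqadj with hadj | ⟨_, hadj⟩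
          · rw [hq1] at hadj; exact G.loopless.irrefl _ hadj
          · refine hy2 q.2 ⟨h2, fun hqs : q.2 = s.2 => ?_⟩ hadj
            apply hqne
            simp only [Set.mem_singleton_iff]
            exact Prod.ext (hq1.trans hsx.symm) hqs
        · obtain ⟨hq1, hq2⟩ := hFA _ h
          rcases hqadj with hadj | ⟨he, _⟩
          · exact hq2 hadj.symm
          · exact hq1 he
    · -- s ∈ F
      obtain ⟨a, y, ha1, ha2, hnm, hnadj⟩ := hFmin s hs2
      rcases hdom' (a, y) with ⟨hmem, hne⟩ | ⟨q, ⟨hqmem, hqne⟩, hqadj⟩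
      · rcases Finset.mem_union.mp (Finset.mem_coe.mp hmem) with h | h
        · exact ha1 (Finset.mem_singleton.mp (Finset.mem_product.mp h).1)
        · exact hnm (Finset.mem_erase.mpr ⟨fun he => hne (by simp [he]), h⟩)
      · rcases Finset.mem_union.mp (Finset.mem_coe.mp hqmem) with h | h
        · have hq1 : q.1 = x₀ := Finset.mem_singleton.mp (Finset.mem_product.mp h).1
          rcases hqadj with hadj | ⟨he, _⟩
          · exact ha2 (hq1 ▸ hadj)
          · exact ha1 (he.symm.trans hq1)
        · exact hnadj q (Finset.mem_erase.mpr ⟨fun he => hqne (by simp [he]), h⟩) hqadj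

theorem stmt17_aux {V W : Type*} [Fintype V] [Fintype W]
    (G : SimpleGraph V) (H : SimpleGraph W)
    (hVcard : 2 ≤ Fintype.card V) (hWcard : 2 ≤ Fintype.card W)
    (hGconn : G.Connected)
    (hwd : ∀ D₁ D₂ : Finset (V × W), IsMinDomSet (lexProd G H) ↑D₁ → IsMinDomSet (lexProd G H) ↑D₂ → D₁.card = D₂.card) :
    ∀ D₁ D₂ : Finset W, IsMinDomSet H ↑D₁ → IsMinDomSet H ↑D₂ → D₁.card = D₂.card := by
  classical
  intro D₁ D₂ h₁ h₂
  have hV : Nonempty V := Fintype.card_pos_iff.mp (by omega)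
  have hW : Nonempty W := Fintype.card_pos_iff.mp (by omega)
  obtain ⟨x₀⟩ := hV
  set P : Finset (V × W) → Prop := fun F =>
    (∀ p ∈ F, p.1 ≠ x₀ ∧ ¬ G.Adj x₀ p.1) ∧
    (∀ a : V, a ≠ x₀ → ¬ G.Adj x₀ a → ∀ y : W,
      (a, y) ∈ F ∨ ∃ q ∈ F, (lexProd G H).Adj q (a, y)) with hP
  have hfull : P (Finset.univ.filter (fun p : V × W => p.1 ≠ x₀ ∧ ¬ G.Adj x₀ p.1)) := by
    constructor
    · intro p hp
      exact (Finset.mem_filter.mp hp).2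
    · intro a ha1 ha2 y
      left
      simp [ha1, ha2]
  obtain ⟨F, -, ⟨hFA, hFdom⟩, hFmin'⟩ := exists_minimal_subset P _ hfull
  have hFmin : ∀ f ∈ F, ∃ a y, a ≠ x₀ ∧ ¬ G.Adj x₀ a ∧ (a, y) ∉ F.erase f ∧
      ∀ q ∈ F.erase f, ¬ (lexProd G H).Adj q (a, y) := by
    intro f hf
    have hne : ¬ ((∀ p ∈ F.erase f, p.1 ≠ x₀ ∧ ¬ G.Adj x₀ p.1) ∧
        (∀ a : V, a ≠ x₀ → ¬ G.Adj x₀ a → ∀ y : W,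
          (a, y) ∈ F.erase f ∨ ∃ q ∈ F.erase f, (lexProd G H).Adj q (a, y))) :=
      hFmin' (F.erase f) (Finset.erase_ssubset hf)
    have hsub : ∀ p ∈ F.erase f, p.1 ≠ x₀ ∧ ¬ G.Adj x₀ p.1 :=
      fun p hp => hFA p (Finset.mem_of_mem_erase hp)
    have hne2 : ¬ (∀ a : V, a ≠ x₀ → ¬ G.Adj x₀ a → ∀ y : W,
        (a, y) ∈ F.erase f ∨ ∃ q ∈ F.erase f, (lexProd G H).Adj q (a, y)) :=
      fun hB => hne ⟨hsub, hB⟩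
    push_neg at hne2
    obtain ⟨a, ha1, ha2, y, hy1, hy2⟩ := hne2
    exact ⟨a, y, ha1, ha2, hy1, hy2⟩
  have k₁ := key G H hW x₀ F hFA hFdom hFmin D₁ h₁
  have k₂ := key G H hW x₀ F hFA hFdom hFmin D₂ h₂
  have hcard := hwd _ _ k₁ k₂
  have hdisj : ∀ D : Finset W, Disjoint (({x₀} : Finset V) ×ˢ D) F := by
    intro D
    rw [Finset.disjoint_left]
    intro p hp hpF
    exact (hFA p hpF).1 (Finset.mem_singleton.mp (Finset.mem_product.mp hp).1)
  rw [Finset.card_union_of_disjoint (hdisj D₁), Finset.card_union_of_disjoint (hdisj D₂),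
    Finset.card_product, Finset.card_product] at hcard
  simpa using hcard

theorem stmt17 {V W : Type*} [Fintype V] [Fintype W]
    (G : SimpleGraph V) (H : SimpleGraph W)
    (hVcard : 2 ≤ Fintype.card V) (hWcard : 2 ≤ Fintype.card W)
    (hGconn : G.Connected)
    (hwd : WellDominated (V × W) (lexProd G H)) :
    WellDominated W H :=
  stmt17_aux G H hVcard hWcard hGconn hwd
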